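/- Let h(x) = ‖x‖²/2 on ℝ^d and let f be convex with h ≤ f ≤ R·h pointwise for some R ≥ 1 (possibly R = ∞, in which case drop the upper bound). Then for every t > 0, f* ≤ (f + t·h)* + t·(1 + √(1 − R^{-1}))²·h pointwise, where f* denotes the Legendre–Fenchel transform. -/
import Mathlib


open scoped RealInnerProductSpace

noncomputable section

/-- The self-polar function `h(x) = ‖x‖²/2`. -/
def hFun {d : ℕ} (x : EuclideanSpace ℝ (Fin d)) : ℝ := ‖x‖ ^ 2 / 2

/-- The Legendre–Fenchel transform `f*(x) = sup_y (⟨x,y⟩ − f(y))`. -/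
def legR {d : ℕ} (f : EuclideanSpace ℝ (Fin d) → ℝ) (x : EuclideanSpace ℝ (Fin d)) : ℝ :=
  sSup (Set.range fun y => ⟪x, y⟫ - f y)

lemma lam_val (Rt k P : ℝ) (hk : 0 < k) (hRt : 0 < Rt) :
    P / (2 * Rt * k) * P - Rt * ((P / (2 * Rt * k)) ^ 2 * k) = P ^ 2 / (4 * Rt * k) := by
  field_simp
  ring

/-- Pure real-number core of the perturbation bound. -/
lemma legendre_aux (R t u c a b p fy G : ℝ)
    (hR : 1 ≤ R) (ht : 0 < t) (hu0 : 0 ≤ u) (hu2 : R * u ^ 2 = R - 1)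
    (hc : c = (1 + u) ^ 2) (ha0 : 0 ≤ a) (hb0 : 0 ≤ b)
    (hkf : b ^ 2 / 2 ≤ fy) (hpab : p ≤ a * b) (hG0 : 0 ≤ G)
    (hA : p - (fy + t * (b ^ 2 / 2)) ≤ G)
    (hB : 0 < b ^ 2 / 2 → p ^ 2 / (4 * (R + t) * (b ^ 2 / 2)) ≤ G) :
    p - fy ≤ G + t * c * (a ^ 2 / 2) := by
  have hc1 : 1 ≤ c := by
    have h : (1 + u) ^ 2 = 1 + 2 * u + u ^ 2 := by ring
    rw [hc, h]
    linarith [sq_nonneg u]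
  have htcH : 0 ≤ t * c * (a ^ 2 / 2) := by positivity
  by_cases hcase : b ^ 2 / 2 ≤ c * (a ^ 2 / 2)
  · have := mul_le_mul_of_nonneg_left hcase ht.le
    linarith
  · push_neg at hcase
    have hk0 : (0:ℝ) < b ^ 2 / 2 := lt_of_le_of_lt (by positivity) hcase
    by_cases hps : p - fy ≤ 0
    · linarith
    · push_neg at hps
      have hppos : 0 < p := by linarith
      have hba : (1 + u) * a ≤ b := by
        by_contra hcon
        push_neg at hcon
        have h1 : 0 ≤ (1 + u) * a := mul_nonneg (by linarith) ha0
        have h2 : b * b < ((1 + u) * a) * ((1 + u) * a) := mul_self_lt_mul_self hb0 hcon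
        have h3 : ((1 + u) * a) * ((1 + u) * a) = c * a ^ 2 := by rw [hc]; ring
        nlinarith
      have hab : a ≤ b := by nlinarith [mul_nonneg hu0 ha0]
      have hRt1 : (1:ℝ) ≤ R + t := by linarith
      have hRt0 : (0:ℝ) < R + t := by linarith
      have hR0 : (0:ℝ) < R := by linarith
      have hGlb := hB hk0
      have h2 : u ^ 2 * a ^ 2 ≤ (b - a) ^ 2 := by
        have e1 : u * a ≤ b - a := by linarith
        have e2 : (u * a) * (u * a) ≤ (b - a) * (b - a) :=
          mul_self_le_mul_self (mul_nonneg hu0 ha0) e1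
        nlinarith
      have h3 : 0 ≤ t * (R * (R + t) * c - 1) := by
        have e1 : (1:ℝ) ≤ R * (R + t) := by
          calc (1:ℝ) = 1 * 1 := by ring
          _ ≤ R * (R + t) := mul_le_mul hR hRt1 one_pos.le (by linarith)
        have e2 : (1:ℝ) ≤ R * (R + t) * c :=
          le_trans e1 (le_mul_of_one_le_right (by linarith) hc1)
        exact mul_nonneg ht.le (by linarith)
      have h4 : 0 ≤ a ^ 2 - 2 * (R + t) * a * b + (R + t) * b ^ 2 + t * (R + t) * c * a ^ 2 := by
        have hX : 0 ≤ R * ((R + t) * ((b - a) ^ 2 - u ^ 2 * a ^ 2)) :=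
          mul_nonneg (by linarith) (mul_nonneg (by linarith) (by linarith))
        have hY : 0 ≤ a ^ 2 * (t * (R * (R + t) * c - 1)) := mul_nonneg (sq_nonneg a) h3
        have hZ : (R + t) * a ^ 2 * (R * u ^ 2) = (R + t) * a ^ 2 * (R - 1) := by rw [hu2]
        have h4R : 0 ≤ R * (a ^ 2 - 2 * (R + t) * a * b + (R + t) * b ^ 2
            + t * (R + t) * c * a ^ 2) := by
          have hid : R * (a ^ 2 - 2 * (R + t) * a * b + (R + t) * b ^ 2
              + t * (R + t) * c * a ^ 2)
              = R * ((R + t) * ((b - a) ^ 2 - u ^ 2 * a ^ 2))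
                + ((R + t) * a ^ 2 * (R * u ^ 2) - (R + t) * a ^ 2 * (R - 1))
                + a ^ 2 * (t * (R * (R + t) * c - 1)) := by ring
          rw [hid]
          linarith
        by_contra hcon
        push_neg at hcon
        have : R * (a ^ 2 - 2 * (R + t) * a * b + (R + t) * b ^ 2
            + t * (R + t) * c * a ^ 2) < 0 := mul_neg_of_pos_of_neg hR0 hcon
        linarith
      have h5 : 0 ≤ b ^ 2 * (a ^ 2 - 2 * (R + t) * a * b + (R + t) * b ^ 2
          + t * (R + t) * c * a ^ 2) := mul_nonneg (sq_nonneg b) h4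
      have h6 : 0 ≤ (a * b - p) * (4 * (R + t) * (b ^ 2 / 2) - p - a * b) := by
        apply mul_nonneg (by linarith)
        have e1 : 0 ≤ (R + t - 1) * b ^ 2 := mul_nonneg (by linarith) (sq_nonneg b)
        have e2 : 0 ≤ (b - a) * b := mul_nonneg (by linarith) hb0
        linarith
      have h7 : 0 ≤ (fy - b ^ 2 / 2) * (2 * (R + t) * b ^ 2) :=
        mul_nonneg (by linarith) (by positivity)
      have hmain : (p - fy - t * c * (a ^ 2 / 2)) * (4 * (R + t) * (b ^ 2 / 2)) ≤ p ^ 2 := by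
        linarith [h5, h6, h7]
      have hdiv : p - fy - t * c * (a ^ 2 / 2) ≤ p ^ 2 / (4 * (R + t) * (b ^ 2 / 2)) := by
        rw [le_div_iff₀ (by positivity)]
        exact hmain
      linarith

/-- If `f` is convex with `h ≤ f ≤ R h` for some `R ≥ 1`, where `h(x) = ‖x‖²/2`, then for
every `t > 0`, `f* ≤ (f + t h)* + t (1 + √(1 − R⁻¹))² h` pointwise. -/
theorem legendre_perturbation_sharp_bound {d : ℕ}
    (f : EuclideanSpace ℝ (Fin d) → ℝ) (hconv : ConvexOn ℝ Set.univ f) (hf0 : f 0 = 0)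
    (R : ℝ) (hR : 1 ≤ R) (hlb : ∀ x, hFun x ≤ f x) (hub : ∀ x, f x ≤ R * hFun x)
    (t : ℝ) (ht : 0 < t) :
    ∀ x, legR f x ≤ legR (fun y => f y + t * hFun y) x
        + t * (1 + Real.sqrt (1 - R⁻¹)) ^ 2 * hFun x := by
  intro x
  have hR0 : (0:ℝ) < R := lt_of_lt_of_le one_pos hR
  set u : ℝ := Real.sqrt (1 - R⁻¹) with hu
  have hu0 : 0 ≤ u := Real.sqrt_nonneg _
  have hRinv : R⁻¹ ≤ 1 := by
    rw [inv_le_one_iff₀]; right; exact hR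
  have hu2 : R * u ^ 2 = R - 1 := by
    rw [hu, Real.sq_sqrt (by linarith)]
    field_simp
  -- the perturbed range is bounded above
  have hbdd : BddAbove (Set.range fun y => ⟪x, y⟫ - (f y + t * hFun y)) := by
    refine ⟨‖x‖ ^ 2 / 2, ?_⟩
    rintro _ ⟨y, rfl⟩
    have h1 : ⟪x, y⟫ ≤ ‖x‖ * ‖y‖ := real_inner_le_norm x y
    have h2 : hFun y ≤ f y := hlb y
    have h4 : hFun y = ‖y‖ ^ 2 / 2 := rfl
    have h5 : (0:ℝ) ≤ ‖y‖ := norm_nonneg y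
    nlinarith [sq_nonneg (‖x‖ - ‖y‖), mul_nonneg ht.le (sq_nonneg ‖y‖)]
  have hkey : ∀ z, ⟪x, z⟫ - (f z + t * hFun z) ≤ legR (fun y => f y + t * hFun y) x :=
    fun z => le_csSup hbdd ⟨z, rfl⟩
  set G : ℝ := legR (fun y => f y + t * hFun y) x with hG
  clear_value G
  have hG0 : 0 ≤ G := by
    have h := hkey 0
    have h0 : hFun (0 : EuclideanSpace ℝ (Fin d)) = 0 := by simp [hFun]
    rw [inner_zero_right, hf0, h0] at h
    simpa using h
  refine csSup_le (Set.range_nonempty _) ?_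
  rintro _ ⟨y, rfl⟩
  show ⟪x, y⟫ - f y ≤ G + t * (1 + u) ^ 2 * hFun x
  have hHx : hFun x = ‖x‖ ^ 2 / 2 := rfl
  have hky : hFun y = ‖y‖ ^ 2 / 2 := rfl
  rw [hHx]
  refine legendre_aux R t u ((1 + u) ^ 2) ‖x‖ ‖y‖ (⟪x, y⟫) (f y) G hR ht hu0 hu2 rfl
    (norm_nonneg x) (norm_nonneg y) (hky ▸ hlb y) (real_inner_le_norm x y) hG0 ?_ ?_
  · have := hkey y
    rw [hky] at this
    exact this
  · intro hk0
    have hRt0 : (0:ℝ) < R + t := by linarith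
    set lam : ℝ := (⟪x, y⟫ : ℝ) / (2 * (R + t) * (‖y‖ ^ 2 / 2)) with hlam
    have hz := hkey (lam • y)
    have hinner : ⟪x, lam • y⟫ = lam * ⟪x, y⟫ := real_inner_smul_right x y lam
    have hnorm : hFun (lam • y) = lam ^ 2 * (‖y‖ ^ 2 / 2) := by
      simp only [hFun, norm_smul, mul_pow, Real.norm_eq_abs, sq_abs]
      ring
    have hfub : f (lam • y) ≤ R * (lam ^ 2 * (‖y‖ ^ 2 / 2)) := by
      have h := hub (lam • y); rwa [hnorm] at h
    rw [hinner, hnorm] at hz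
    have hGlb : lam * ⟪x, y⟫ - (R + t) * (lam ^ 2 * (‖y‖ ^ 2 / 2)) ≤ G := by linarith
    have hval := lam_val (R + t) (‖y‖ ^ 2 / 2) (⟪x, y⟫ : ℝ) hk0 hRt0
    rw [hlam]  at hGlb
    rw [hval] at hGlb
    exact hGlb
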